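/- Let n ≥ 3, let f be an affine permutation of quasi-period n, and let 1 ≤ j < r < s ≤ n satisfy f(j) < f(s) < f(r). Assume there is no integer p with j < p < r and f(j) < f(p) < f(s), and no integer p with r < p < s and f(s) < f(p) < f(r). Let g = f ∘ t_{rs} ∘ t_{jr}, so that the word (g(1),…,g(n)) is obtained from (f(1),…,f(n)) by replacing the entries f(j), f(r), f(s) in positions j, r, s by f(s), f(j), f(r) respectively. Then the finite words (f(1),…,f(n)) and (g(1),…,g(n)) have the same number of inversions, and (g(1),…,g(n)) is lexicographically greater than (f(1),…,f(n)). -/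

import Mathlib

/-- The affine transposition `t_{ij}` (for `i ≢ j (mod n)`): it interchanges
`i + pn` and `j + pn` for all `p` and fixes all other integers. -/
def affineTranspose (n : ℕ) (i j : ℤ) (q : ℤ) : ℤ :=
  if (n : ℤ) ∣ (q - i) then j + (q - i)
  else if (n : ℤ) ∣ (q - j) then i + (q - j)
  else q

/-- Evaluation of `affineTranspose` when all arguments lie in `[1, n]`. -/
lemma affineTranspose_eval (n : ℕ) (i k q : ℤ) (hi1 : 1 ≤ i) (hi2 : i ≤ n)
    (hk1 : 1 ≤ k) (hk2 : k ≤ n) (hq1 : 1 ≤ q) (hq2 : q ≤ n) :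
    affineTranspose n i k q = if q = i then k else if q = k then i else q := by
  have hd : ∀ a b : ℤ, 1 ≤ a → a ≤ n → 1 ≤ b → b ≤ n → (n : ℤ) ∣ (a - b) → a = b := by
    intro a b ha1 ha2 hb1 hb2 h
    have habs : |a - b| < (n : ℤ) := abs_lt.mpr ⟨by omega, by omega⟩
    have := Int.eq_zero_of_abs_lt_dvd h habs
    omega
  unfold affineTranspose
  by_cases hqi : q = i
  · subst hqi; simp
  · rw [if_neg (fun h => hqi (hd q i hq1 hq2 hi1 hi2 h)), if_neg hqi]
    by_cases hqk : q = k
    · subst hqk; simp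
    · rw [if_neg (fun h => hqk (hd q k hq1 hq2 hk1 hk2 h)), if_neg hqk]

/-- The 3-cycle `j ↦ s ↦ r ↦ j` on positions. -/
def tauf (j r s q : ℤ) : ℤ :=
  if q = j then s else if q = r then j else if q = s then r else q

lemma tauf_eval (n : ℕ) (j r s q : ℤ) (h1 : 1 ≤ j) (h2 : j < r) (h3 : r < s)
    (h4 : s ≤ n) (hq1 : 1 ≤ q) (hq2 : q ≤ n) :
    affineTranspose n r s (affineTranspose n j r q) = tauf j r s q := by
  rw [affineTranspose_eval n j r q (by omega) (by omega) (by omega) (by omega) hq1 hq2]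
  unfold tauf
  by_cases hqj : q = j
  · rw [if_pos hqj, if_pos hqj,
      affineTranspose_eval n r s r (by omega) (by omega) (by omega) (by omega) (by omega) (by omega)]
    simp
  · rw [if_neg hqj, if_neg hqj]
    by_cases hqr : q = r
    · rw [if_pos hqr, if_pos hqr,
        affineTranspose_eval n r s j (by omega) (by omega) (by omega) (by omega) (by omega) (by omega)]
      rw [if_neg (by omega), if_neg (by omega)]
    · rw [if_neg hqr, if_neg hqr,
        affineTranspose_eval n r s q (by omega) (by omega) (by omega) (by omega) hq1 hq2,
        if_neg hqr]

/-- The forward bijection on inversion pairs. -/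
def lsPhi (j r s : ℤ) (x : ℤ × ℤ) : ℤ × ℤ :=
  if x.1 = j then (if x.2 < r then (j, x.2) else (r, x.2))
  else if x.1 = r then (if x.2 < s then (j, x.2) else if x.2 = s then (j, r) else (s, x.2))
  else if x.1 = s then (j, x.2)
  else if x.2 = j then (x.1, r)
  else if x.2 = r then (x.1, s)
  else if x.2 = s then (if x.1 < j then (x.1, j) else if x.1 < r then (x.1, r) else (x.1, s))
  else x

/-- The backward bijection on inversion pairs. -/
def lsPsi (j r s : ℤ) (x : ℤ × ℤ) : ℤ × ℤ :=
  if x.1 = j then (if x.2 = r then (r, s) else if x.2 < r then (j, x.2)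
    else if x.2 < s then (r, x.2) else if x.2 = s then (j, s) else (s, x.2))
  else if x.1 = r then (j, x.2)
  else if x.1 = s then (r, x.2)
  else if x.2 = j then (x.1, s)
  else if x.2 = r then (if x.1 < j then (x.1, j) else (x.1, s))
  else if x.2 = s then (if x.1 < r then (x.1, r) else (x.1, s))
  else x

set_option maxHeartbeats 4000000 in
theorem stmt19 (n : ℕ) (hn : 3 ≤ n) (f : ℤ ≃ ℤ)
    (hf : ∀ i : ℤ, f (i + n) = f i + n)
    (j r s : ℤ) (h1 : 1 ≤ j) (h2 : j < r) (h3 : r < s) (h4 : s ≤ n)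
    (hv : f j < f s ∧ f s < f r)
    (hgap1 : ¬ ∃ p : ℤ, j < p ∧ p < r ∧ f j < f p ∧ f p < f s)
    (hgap2 : ¬ ∃ p : ℤ, r < p ∧ p < s ∧ f s < f p ∧ f p < f r) :
    ((Finset.Icc (1 : ℤ) n ×ˢ Finset.Icc (1 : ℤ) n).filter
        (fun p => p.1 < p.2 ∧ f p.2 < f p.1)).card =
      ((Finset.Icc (1 : ℤ) n ×ˢ Finset.Icc (1 : ℤ) n).filter
        (fun p => p.1 < p.2 ∧
          f (affineTranspose n r s (affineTranspose n j r p.2)) <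
            f (affineTranspose n r s (affineTranspose n j r p.1)))).card ∧
    ∃ a : ℤ, 1 ≤ a ∧ a ≤ n ∧
      (∀ p : ℤ, 1 ≤ p → p < a →
        f (affineTranspose n r s (affineTranspose n j r p)) = f p) ∧
      f a < f (affineTranspose n r s (affineTranspose n j r a)) := by
  obtain ⟨hv1, hv2⟩ := hv
  have finj : Function.Injective f := f.injective
  have G1 : ∀ p : ℤ, j < p → p < r → f p < f j ∨ f s < f p := by
    intro p hp1 hp2
    rcases lt_trichotomy (f p) (f j) with h | h | h
    · exact Or.inl h
    · exact absurd (finj h) (by omega)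
    · rcases lt_trichotomy (f p) (f s) with h' | h' | h'
      · exact absurd ⟨p, hp1, hp2, h, h'⟩ hgap1
      · exact absurd (finj h') (by omega)
      · exact Or.inr h'
  have G2 : ∀ p : ℤ, r < p → p < s → f p < f s ∨ f r < f p := by
    intro p hp1 hp2
    rcases lt_trichotomy (f p) (f s) with h | h | h
    · exact Or.inl h
    · exact absurd (finj h) (by omega)
    · rcases lt_trichotomy (f p) (f r) with h' | h' | h'
      · exact absurd ⟨p, hp1, hp2, h, h'⟩ hgap2
      · exact absurd (finj h') (by omega)
      · exact Or.inr h'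
  constructor
  · -- inversion counts agree
    have hT : ((Finset.Icc (1 : ℤ) n ×ˢ Finset.Icc (1 : ℤ) n).filter
        (fun p => p.1 < p.2 ∧
          f (affineTranspose n r s (affineTranspose n j r p.2)) <
            f (affineTranspose n r s (affineTranspose n j r p.1)))) =
        ((Finset.Icc (1 : ℤ) n ×ˢ Finset.Icc (1 : ℤ) n).filter
        (fun p => p.1 < p.2 ∧ f (tauf j r s p.2) < f (tauf j r s p.1))) := by
      apply Finset.filter_congr
      rintro ⟨a, b⟩ hx
      simp only [Finset.mem_product, Finset.mem_Icc] at hx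
      rw [tauf_eval n j r s a h1 h2 h3 h4 (by omega) (by omega),
        tauf_eval n j r s b h1 h2 h3 h4 (by omega) (by omega)]
    rw [hT]
    apply Finset.card_nbij' (lsPhi j r s) (lsPsi j r s)
    · -- lsPhi maps source into target
      rintro ⟨p, q⟩ hx
      simp only [Finset.mem_coe, Finset.mem_filter, Finset.mem_product, Finset.mem_Icc] at hx
      obtain ⟨⟨⟨hp1, hp2⟩, hq1, hq2⟩, hpq, hinv⟩ := hx
      dsimp only [lsPhi]
      split_ifs with hpj hqr hpr hqls hqs hps hqj hqr2 hqs2 hplj hplr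
      all_goals simp only [Finset.mem_coe, Finset.mem_filter, Finset.mem_product, Finset.mem_Icc]
      · -- A1 : p = j, q < r
        have hfp : f p = f j := by rw [hpj]
        have e1 : tauf j r s q = q := by unfold tauf; split_ifs <;> omega
        have e2 : tauf j r s j = s := by unfold tauf; split_ifs <;> omega
        rw [e1, e2]; omega
      · -- A2 : p = j, q ≥ r
        have hfp : f p = f j := by rw [hpj]
        have hqr' : q ≠ r := by rintro rfl; omega
        have hqs' : q ≠ s := by rintro rfl; omega
        have e1 : tauf j r s q = q := by unfold tauf; split_ifs <;> omega
        have e2 : tauf j r s r = j := by unfold tauf; split_ifs <;> omega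
        rw [e1, e2]; omega
      · -- A3 : p = r, q < s
        have hfp : f p = f r := by rw [hpr]
        have e1 : tauf j r s q = q := by unfold tauf; split_ifs <;> omega
        have e2 : tauf j r s j = s := by unfold tauf; split_ifs <;> omega
        rw [e1, e2]
        rcases G2 q (by omega) (by omega) with h | h <;> omega
      · -- A4 : p = r, q = s
        have hfp : f p = f r := by rw [hpr]
        have e1 : tauf j r s r = j := by unfold tauf; split_ifs <;> omega
        have e2 : tauf j r s j = s := by unfold tauf; split_ifs <;> omega
        rw [e1, e2]; omega
      · -- A5 : p = r, q > s
        have hfp : f p = f r := by rw [hpr]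
        have e1 : tauf j r s q = q := by unfold tauf; split_ifs <;> omega
        have e2 : tauf j r s s = r := by unfold tauf; split_ifs <;> omega
        rw [e1, e2]; omega
      · -- A6 : p = s, q > s
        have hfp : f p = f s := by rw [hps]
        have e1 : tauf j r s q = q := by unfold tauf; split_ifs <;> omega
        have e2 : tauf j r s j = s := by unfold tauf; split_ifs <;> omega
        rw [e1, e2]; omega
      · -- A7 : q = j, p < j
        have hfq : f q = f j := by rw [hqj]
        have e1 : tauf j r s r = j := by unfold tauf; split_ifs <;> omega
        have e2 : tauf j r s p = p := by unfold tauf; split_ifs <;> omega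
        rw [e1, e2]; omega
      · -- A8 : q = r, p < r, p ∉ {j,r,s}
        have hfq : f q = f r := by rw [hqr2]
        have e1 : tauf j r s s = r := by unfold tauf; split_ifs <;> omega
        have e2 : tauf j r s p = p := by unfold tauf; split_ifs <;> omega
        rw [e1, e2]; omega
      · -- A9 : q = s, p < j
        have hfq : f q = f s := by rw [hqs2]
        have e1 : tauf j r s j = s := by unfold tauf; split_ifs <;> omega
        have e2 : tauf j r s p = p := by unfold tauf; split_ifs <;> omega
        rw [e1, e2]; omega
      · -- A10 : q = s, j ≤ p < r  (p ≠ j)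
        have hfq : f q = f s := by rw [hqs2]
        have e1 : tauf j r s r = j := by unfold tauf; split_ifs <;> omega
        have e2 : tauf j r s p = p := by unfold tauf; split_ifs <;> omega
        rw [e1, e2]; omega
      · -- A11 : q = s, r ≤ p < s  (p ≠ r)
        have hfq : f q = f s := by rw [hqs2]
        have e1 : tauf j r s s = r := by unfold tauf; split_ifs <;> omega
        have e2 : tauf j r s p = p := by unfold tauf; split_ifs <;> omega
        rw [e1, e2]
        rcases G2 p (by omega) (by omega) with h | h <;> omega
      · -- A12 : identity case
        have e1 : tauf j r s q = q := by unfold tauf; split_ifs <;> omega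
        have e2 : tauf j r s p = p := by unfold tauf; split_ifs <;> omega
        rw [e1, e2]; omega
    · -- lsPsi maps target into source
      rintro ⟨a, b⟩ hx
      simp only [Finset.mem_coe, Finset.mem_filter, Finset.mem_product, Finset.mem_Icc] at hx
      obtain ⟨⟨⟨ha1, ha2⟩, hb1, hb2⟩, hab, hinv⟩ := hx
      dsimp only [lsPsi]
      split_ifs with haj hbr hblr hbls hbes har has hbj hbr2 halj hbs2 halr
      all_goals simp only [Finset.mem_coe, Finset.mem_filter, Finset.mem_product, Finset.mem_Icc]
      · -- B1 : a = j, b = r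
        omega
      · -- B2 : a = j, b < r
        have ea : tauf j r s a = s := by unfold tauf; split_ifs <;> omega
        have eb : tauf j r s b = b := by unfold tauf; split_ifs <;> omega
        rw [ea, eb] at hinv
        rcases G1 b (by omega) (by omega) with h | h <;> omega
      · -- B3 : a = j, r < b < s
        have ea : tauf j r s a = s := by unfold tauf; split_ifs <;> omega
        have eb : tauf j r s b = b := by unfold tauf; split_ifs <;> omega
        rw [ea, eb] at hinv
        omega
      · -- B4 : a = j, b = s : impossible
        have ea : tauf j r s a = s := by unfold tauf; split_ifs <;> omega
        have eb : tauf j r s b = r := by unfold tauf; split_ifs <;> omega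
        rw [ea, eb] at hinv
        omega
      · -- B5 : a = j, b > s
        have ea : tauf j r s a = s := by unfold tauf; split_ifs <;> omega
        have eb : tauf j r s b = b := by unfold tauf; split_ifs <;> omega
        rw [ea, eb] at hinv
        omega
      · -- B6 : a = r
        have ea : tauf j r s a = j := by unfold tauf; split_ifs <;> omega
        rcases eq_or_ne b s with hbs' | hbs'
        · have eb : tauf j r s b = r := by unfold tauf; split_ifs <;> omega
          rw [ea, eb] at hinv
          omega
        · have eb : tauf j r s b = b := by unfold tauf; split_ifs <;> omega
          rw [ea, eb] at hinv
          omega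
      · -- B7 : a = s
        have ea : tauf j r s a = r := by unfold tauf; split_ifs <;> omega
        have eb : tauf j r s b = b := by unfold tauf; split_ifs <;> omega
        rw [ea, eb] at hinv
        omega
      · -- B8 : b = j
        have ea : tauf j r s a = a := by unfold tauf; split_ifs <;> omega
        have eb : tauf j r s b = s := by unfold tauf; split_ifs <;> omega
        rw [ea, eb] at hinv
        omega
      · -- B9 : b = r, a < j
        have ea : tauf j r s a = a := by unfold tauf; split_ifs <;> omega
        have eb : tauf j r s b = j := by unfold tauf; split_ifs <;> omega
        rw [ea, eb] at hinv
        omega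
      · -- B10 : b = r, j < a < r
        have ea : tauf j r s a = a := by unfold tauf; split_ifs <;> omega
        have eb : tauf j r s b = j := by unfold tauf; split_ifs <;> omega
        rw [ea, eb] at hinv
        rcases G1 a (by omega) (by omega) with h | h <;> omega
      · -- B11 : b = s, a < r
        have ea : tauf j r s a = a := by unfold tauf; split_ifs <;> omega
        have eb : tauf j r s b = r := by unfold tauf; split_ifs <;> omega
        rw [ea, eb] at hinv
        omega
      · -- B12 : b = s, r < a < s
        have ea : tauf j r s a = a := by unfold tauf; split_ifs <;> omega
        have eb : tauf j r s b = r := by unfold tauf; split_ifs <;> omega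
        rw [ea, eb] at hinv
        omega
      · -- B13 : identity case
        have ea : tauf j r s a = a := by unfold tauf; split_ifs <;> omega
        have eb : tauf j r s b = b := by unfold tauf; split_ifs <;> omega
        rw [ea, eb] at hinv
        omega
    · -- lsPsi ∘ lsPhi = id on source
      rintro ⟨p, q⟩ hx
      simp only [Finset.mem_coe, Finset.mem_filter, Finset.mem_product, Finset.mem_Icc] at hx
      obtain ⟨⟨⟨hp1, hp2⟩, hq1, hq2⟩, hpq, hinv⟩ := hx
      dsimp only [lsPhi]
      split_ifs with hpj hqr hpr hqls hqs hps hqj hqr2 hqs2 hplj hplr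
      · -- A1
        dsimp only [lsPsi]
        split_ifs <;> simp only [Prod.mk.injEq, and_true, true_and] <;> first | trivial | omega
      · -- A2
        have hfp : f p = f j := by rw [hpj]
        have hqr' : q ≠ r := by rintro rfl; omega
        have hqs' : q ≠ s := by rintro rfl; omega
        dsimp only [lsPsi]
        split_ifs <;> simp only [Prod.mk.injEq, and_true, true_and] <;> first | trivial | omega
      · -- A3
        dsimp only [lsPsi]
        split_ifs <;> simp only [Prod.mk.injEq, and_true, true_and] <;> first | trivial | omega
      · -- A4
        dsimp only [lsPsi]
        split_ifs <;> simp only [Prod.mk.injEq, and_true, true_and] <;> first | trivial | omega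
      · -- A5
        dsimp only [lsPsi]
        split_ifs <;> simp only [Prod.mk.injEq, and_true, true_and] <;> first | trivial | omega
      · -- A6
        dsimp only [lsPsi]
        split_ifs <;> simp only [Prod.mk.injEq, and_true, true_and] <;> first | trivial | omega
      · -- A7
        dsimp only [lsPsi]
        split_ifs <;> simp only [Prod.mk.injEq, and_true, true_and] <;> first | trivial | omega
      · -- A8
        dsimp only [lsPsi]
        split_ifs <;> simp only [Prod.mk.injEq, and_true, true_and] <;> first | trivial | omega
      · -- A9
        dsimp only [lsPsi]
        split_ifs <;> simp only [Prod.mk.injEq, and_true, true_and] <;> first | trivial | omega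
      · -- A10
        dsimp only [lsPsi]
        split_ifs <;> simp only [Prod.mk.injEq, and_true, true_and] <;> first | trivial | omega
      · -- A11
        dsimp only [lsPsi]
        split_ifs <;> simp only [Prod.mk.injEq, and_true, true_and] <;> first | trivial | omega
      · -- A12
        dsimp only [lsPsi]
        split_ifs <;> simp only [Prod.mk.injEq, and_true, true_and] <;> first | trivial | omega
    · -- lsPhi ∘ lsPsi = id on target
      rintro ⟨a, b⟩ hx
      simp only [Finset.mem_coe, Finset.mem_filter, Finset.mem_product, Finset.mem_Icc] at hx
      obtain ⟨⟨⟨ha1, ha2⟩, hb1, hb2⟩, hab, hinv⟩ := hx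
      dsimp only [lsPsi]
      split_ifs with haj hbr hblr hbls hbes har has hbj hbr2 halj hbs2 halr
      · -- B1
        dsimp only [lsPhi]
        split_ifs <;> simp only [Prod.mk.injEq, and_true, true_and] <;> first | trivial | omega
      · -- B2
        dsimp only [lsPhi]
        split_ifs <;> simp only [Prod.mk.injEq, and_true, true_and] <;> first | trivial | omega
      · -- B3
        dsimp only [lsPhi]
        split_ifs <;> simp only [Prod.mk.injEq, and_true, true_and] <;> first | trivial | omega
      · -- B4 : impossible
        have ea : tauf j r s a = s := by unfold tauf; split_ifs <;> omega
        have eb : tauf j r s b = r := by unfold tauf; split_ifs <;> omega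
        rw [ea, eb] at hinv
        exfalso; omega
      · -- B5
        dsimp only [lsPhi]
        split_ifs <;> simp only [Prod.mk.injEq, and_true, true_and] <;> first | trivial | omega
      · -- B6
        have ea : tauf j r s a = j := by unfold tauf; split_ifs <;> omega
        rcases eq_or_ne b s with hbs' | hbs'
        · have eb : tauf j r s b = r := by unfold tauf; split_ifs <;> omega
          rw [ea, eb] at hinv
          exfalso; omega
        · dsimp only [lsPhi]
          split_ifs <;> simp only [Prod.mk.injEq, and_true, true_and] <;> first | trivial | omega
      · -- B7
        dsimp only [lsPhi]
        split_ifs <;> simp only [Prod.mk.injEq, and_true, true_and] <;> first | trivial | omega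
      · -- B8
        dsimp only [lsPhi]
        split_ifs <;> simp only [Prod.mk.injEq, and_true, true_and] <;> first | trivial | omega
      · -- B9
        dsimp only [lsPhi]
        split_ifs <;> simp only [Prod.mk.injEq, and_true, true_and] <;> first | trivial | omega
      · -- B10
        dsimp only [lsPhi]
        split_ifs <;> simp only [Prod.mk.injEq, and_true, true_and] <;> first | trivial | omega
      · -- B11
        dsimp only [lsPhi]
        split_ifs <;> simp only [Prod.mk.injEq, and_true, true_and] <;> first | trivial | omega
      · -- B12
        dsimp only [lsPhi]
        split_ifs <;> simp only [Prod.mk.injEq, and_true, true_and] <;> first | trivial | omega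
      · -- B13
        dsimp only [lsPhi]
        split_ifs <;> simp only [Prod.mk.injEq, and_true, true_and] <;> first | trivial | omega
  · -- lexicographic part : a = j works
    refine ⟨j, h1, by omega, ?_, ?_⟩
    · intro p hp1 hp2
      rw [tauf_eval n j r s p h1 h2 h3 h4 hp1 (by omega)]
      unfold tauf
      rw [if_neg (by omega), if_neg (by omega), if_neg (by omega)]
    · rw [tauf_eval n j r s j h1 h2 h3 h4 h1 (by omega)]
      unfold tauf
      rw [if_pos rfl]
      exact hv1
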